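/- Let X be a nonempty metric space and S ⊆ X. If Player II has a winning strategy in the Banach–Mazur game on X with target S where both players are restricted to playing nonempty open balls, then S is residual (comeagre) in X. -/

import Mathlib

open Metric Set

namespace BMGame

/-- Existence of a maximal family with pairwise disjoint associated sets. -/
lemma exists_maximal_disjoint {α β : Type*} (p : α → Prop) (b : α → Set β) :
    ∃ A : Set α, (∀ G ∈ A, p G) ∧
      (A.Pairwise fun G G' => Disjoint (b G) (b G')) ∧
      (∀ G, p G → (∀ G' ∈ A, G' ≠ G → Disjoint (b G) (b G')) → G ∈ A) := by
  set 𝒮 : Set (Set α) :=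
    {A : Set α | (∀ G ∈ A, p G) ∧ A.Pairwise fun G G' => Disjoint (b G) (b G')} with h𝒮
  have hub : ∀ c ⊆ 𝒮, IsChain (· ⊆ ·) c → ∃ ub ∈ 𝒮, ∀ s ∈ c, s ⊆ ub := by
    intro c hc hchain
    refine ⟨⋃₀ c, ⟨?_, ?_⟩, fun s hs => Set.subset_sUnion_of_mem hs⟩
    · rintro G ⟨s, hs, hGs⟩
      exact (hc hs).1 G hGs
    · rintro G ⟨s, hs, hGs⟩ G' ⟨t, ht, hGt⟩ hne
      rcases hchain.total hs ht with hst | hts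
      · exact (hc ht).2 (hst hGs) hGt hne
      · exact (hc hs).2 hGs (hts hGt) hne
  obtain ⟨m, hm⟩ := zorn_subset 𝒮 hub
  refine ⟨m, hm.prop.1, hm.prop.2, fun G hG hdisj => ?_⟩
  have hins : insert G m ∈ 𝒮 := by
    constructor
    · rintro G' (rfl | hG')
      · exact hG
      · exact hm.prop.1 G' hG'
    · refine Set.pairwise_insert.2 ⟨hm.prop.2, fun G' hG' hne => ?_⟩
      exact ⟨hdisj G' hG' (Ne.symm hne), (hdisj G' hG' (Ne.symm hne)).symm⟩
  exact (hm.le_of_ge hins (Set.subset_insert G m)) (Set.mem_insert G m)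

variable {X : Type*} [MetricSpace X]

variable (σ : (n : ℕ) → (Fin (n+1) → X × ℝ) → X × ℝ)

/-- Player II's ball in response to history `G`. -/
def IIball (n : ℕ) (G : Fin (n+1) → X × ℝ) : Set X :=
  Metric.ball (σ n G).1 (σ n G).2

/-- Legality of a history of Player I's moves. -/
def Legal (n : ℕ) (G : Fin (n+1) → X × ℝ) : Prop :=
  (∀ i, 0 < (G i).2) ∧
  ∀ i : Fin n, Metric.ball (G i.succ).1 (G i.succ).2 ⊆
    IIball σ i.val (fun j : Fin (i.val+1) => G (Fin.castLE (Nat.succ_le_succ i.isLt.le) j))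

lemma snoc_eq_of_lt {α : Type*} {n : ℕ} (G0 : Fin (n+1) → α) (p : α) (k : Fin (n+2))
    (h : k.val < n+1) : (Fin.snoc G0 p : Fin (n+2) → α) k = G0 ⟨k.val, h⟩ := by
  induction k using Fin.lastCases with
  | last => simp at h
  | cast j => rw [Fin.snoc_castSucc]; exact congrArg G0 (Fin.ext rfl)

lemma legal_snoc {n : ℕ} {G0 : Fin (n+1) → X × ℝ} (hG0 : Legal σ n G0)
    {x : X} {r : ℝ} (hr : 0 < r) (hsub : Metric.ball x r ⊆ IIball σ n G0) :
    Legal σ (n+1) (Fin.snoc G0 (x, r)) := by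
  constructor
  · intro i
    induction i using Fin.lastCases with
    | last => rw [Fin.snoc_last]; exact hr
    | cast j => rw [Fin.snoc_castSucc]; exact hG0.1 j
  · intro i
    induction i using Fin.lastCases with
    | last =>
      rw [Fin.succ_last, Fin.snoc_last]
      convert hsub using 2
      · rfl
      funext j
      rw [snoc_eq_of_lt G0 (x, r) _ j.isLt]
      exact congrArg G0 (Fin.ext rfl)
    | cast j =>
      have h1 : (Fin.castSucc j).succ = Fin.castSucc j.succ := Fin.ext rfl
      have h2 : (Fin.snoc G0 (x, r) : Fin (n+2) → X × ℝ) (Fin.castSucc j.succ) = G0 j.succ :=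
        Fin.snoc_castSucc _ _ _
      rw [h1, h2]
      convert hG0.2 j using 2
      · rfl
      funext k
      rw [snoc_eq_of_lt G0 (x, r) _ (Nat.lt_trans k.isLt (Nat.succ_lt_succ j.isLt))]
      exact congrArg G0 (Fin.ext rfl)

/-- The levels of the tree: maximal families of legal positions with pairwise
disjoint Player-II response balls. -/
noncomputable def levels : (n : ℕ) → Set (Fin (n+1) → X × ℝ)
  | 0 => (exists_maximal_disjoint (Legal σ 0) (IIball σ 0)).choose
  | (n+1) => (exists_maximal_disjoint
      (fun G : Fin (n+2) → X × ℝ => Legal σ (n+1) G ∧ Fin.init G ∈ levels n)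
      (IIball σ (n+1))).choose

lemma levels_legal : ∀ n, ∀ G ∈ levels σ n, Legal σ n G := by
  rintro (_ | n) G hG
  · exact (exists_maximal_disjoint (Legal σ 0) (IIball σ 0)).choose_spec.1 G hG
  · exact ((exists_maximal_disjoint _ (IIball σ (n+1))).choose_spec.1 G hG).1

lemma levels_init (n : ℕ) : ∀ G ∈ levels σ (n+1), Fin.init G ∈ levels σ n := fun G hG =>
  ((exists_maximal_disjoint _ (IIball σ (n+1))).choose_spec.1 G hG).2

lemma levels_pairwise : ∀ n, (levels σ n).Pairwise
    fun G G' => Disjoint (IIball σ n G) (IIball σ n G') := by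
  rintro (_ | n)
  · exact (exists_maximal_disjoint (Legal σ 0) (IIball σ 0)).choose_spec.2.1
  · exact (exists_maximal_disjoint _ (IIball σ (n+1))).choose_spec.2.1

lemma levels_max0 (G : Fin 1 → X × ℝ) (hG : Legal σ 0 G)
    (h : ∀ G' ∈ levels σ 0, G' ≠ G → Disjoint (IIball σ 0 G) (IIball σ 0 G')) :
    G ∈ levels σ 0 :=
  (exists_maximal_disjoint (Legal σ 0) (IIball σ 0)).choose_spec.2.2 G hG h

lemma levels_maxS (n : ℕ) (G : Fin (n+2) → X × ℝ) (hG : Legal σ (n+1) G)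
    (hinit : Fin.init G ∈ levels σ n)
    (h : ∀ G' ∈ levels σ (n+1), G' ≠ G → Disjoint (IIball σ (n+1) G) (IIball σ (n+1) G')) :
    G ∈ levels σ (n+1) :=
  (exists_maximal_disjoint _ (IIball σ (n+1))).choose_spec.2.2 G ⟨hG, hinit⟩ h

lemma level_union_dense
    (hleg : ∀ (n : ℕ) (G : Fin (n+1) → X × ℝ), (∀ i, 0 < (G i).2) →
      0 < (σ n G).2 ∧
        Metric.ball (σ n G).1 (σ n G).2 ⊆ Metric.ball (G (Fin.last n)).1 (G (Fin.last n)).2) :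
    ∀ n, Dense (⋃ G ∈ levels σ n, IIball σ n G) := by
  intro n
  induction n with
  | zero =>
    rw [dense_iff_inter_open]
    intro U hU ⟨y, hy⟩
    obtain ⟨ε, hε, hball⟩ := Metric.isOpen_iff.1 hU y hy
    set G : Fin 1 → X × ℝ := fun _ => (y, ε) with hGdef
    have hGlegal : Legal σ 0 G := ⟨fun _ => hε, fun i => i.elim0⟩
    have hB := hleg 0 G hGlegal.1
    have hBU : IIball σ 0 G ⊆ U := hB.2.trans hball
    by_cases h : ∀ G' ∈ levels σ 0, G' ≠ G → Disjoint (IIball σ 0 G) (IIball σ 0 G')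
    · have hGmem : G ∈ levels σ 0 := levels_max0 σ G hGlegal h
      exact ⟨(σ 0 G).1, hBU (Metric.mem_ball_self hB.1),
        Set.mem_biUnion hGmem (Metric.mem_ball_self hB.1)⟩
    · push_neg at h
      obtain ⟨G', hG', _, hnd⟩ := h
      obtain ⟨z, hz1, hz2⟩ := Set.not_disjoint_iff.1 hnd
      exact ⟨z, hBU hz1, Set.mem_biUnion hG' hz2⟩
  | succ n ih =>
    rw [dense_iff_inter_open]
    intro U hU hUne
    obtain ⟨y, hyU, hyL⟩ := (dense_iff_inter_open.1 ih U hU hUne).imp (fun y hy => hy)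
    obtain ⟨G0, hG0mem, hyG0⟩ := Set.mem_iUnion₂.1 hyL
    have hopen : IsOpen (U ∩ IIball σ n G0) := hU.inter Metric.isOpen_ball
    obtain ⟨ε, hε, hball⟩ := Metric.isOpen_iff.1 hopen y ⟨hyU, hyG0⟩
    set G : Fin (n+2) → X × ℝ := Fin.snoc G0 (y, ε) with hGdef
    have hGlegal : Legal σ (n+1) G :=
      legal_snoc σ (levels_legal σ n G0 hG0mem) hε
        (hball.trans (Set.inter_subset_right))
    have hinitG : Fin.init G = G0 := Fin.init_snoc _ _
    have hB := hleg (n+1) G hGlegal.1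
    have hlast : G (Fin.last (n+1)) = (y, ε) := Fin.snoc_last _ _
    have hBU : IIball σ (n+1) G ⊆ U := by
      refine (hB.2.trans ?_)
      rw [hlast]
      exact hball.trans (Set.inter_subset_left)
    by_cases h : ∀ G' ∈ levels σ (n+1), G' ≠ G →
        Disjoint (IIball σ (n+1) G) (IIball σ (n+1) G')
    · have hGmem : G ∈ levels σ (n+1) :=
        levels_maxS σ n G hGlegal (hinitG ▸ hG0mem) h
      exact ⟨(σ (n+1) G).1, hBU (Metric.mem_ball_self hB.1),
        Set.mem_biUnion hGmem (Metric.mem_ball_self hB.1)⟩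
    · push_neg at h
      obtain ⟨G', hG', _, hnd⟩ := h
      obtain ⟨z, hz1, hz2⟩ := Set.not_disjoint_iff.1 hnd
      exact ⟨z, hBU hz1, Set.mem_biUnion hG' hz2⟩

end BMGame

/-- If Player II has a winning strategy in the Banach–Mazur game on a nonempty metric
space `X` with target set `S`, where both players are restricted to playing nonempty open
balls, then `S` is residual (comeagre) in `X`.

A strategy for Player II is encoded as a map `σ` assigning to each history of Player I's
moves (pairs of centres and radii) a ball; legality requires that on histories of balls of
positive radius, `σ` produces a ball of positive radius contained in Player I's last ball;
winning requires that for every run of the game compatible with `σ`, the intersection of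
Player II's balls is contained in `S`. -/
theorem stmt5 {X : Type*} [MetricSpace X] [Nonempty X] (S : Set X)
    (hwin : ∃ σ : (n : ℕ) → (Fin (n+1) → X × ℝ) → X × ℝ,
      (∀ (n : ℕ) (G : Fin (n+1) → X × ℝ), (∀ i, 0 < (G i).2) →
        0 < (σ n G).2 ∧
          Metric.ball (σ n G).1 (σ n G).2 ⊆ Metric.ball (G (Fin.last n)).1 (G (Fin.last n)).2) ∧
      (∀ G : ℕ → X × ℝ, (∀ n, 0 < (G n).2) →
        (∀ n, Metric.ball (G (n+1)).1 (G (n+1)).2 ⊆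
          Metric.ball (σ n (fun i : Fin (n+1) => G i.val)).1
            (σ n (fun i : Fin (n+1) => G i.val)).2) →
        (⋂ n, Metric.ball (σ n (fun i : Fin (n+1) => G i.val)).1
            (σ n (fun i : Fin (n+1) => G i.val)).2) ⊆ S)) :
    S ∈ residual X := by
  classical
  obtain ⟨σ, hleg, hwin⟩ := hwin
  rw [mem_residual_iff]
  refine ⟨Set.range (fun n => ⋃ G ∈ BMGame.levels σ n, BMGame.IIball σ n G),
    ?_, ?_, Set.countable_range _, ?_⟩
  · rintro t ⟨n, rfl⟩
    exact isOpen_biUnion fun G _ => Metric.isOpen_ball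
  · rintro t ⟨n, rfl⟩
    exact BMGame.level_union_dense σ hleg n
  · intro x hx
    rw [Set.sInter_range] at hx
    have h1 : ∀ n, ∃ G ∈ BMGame.levels σ n, x ∈ BMGame.IIball σ n G := by
      intro n
      have := Set.mem_iInter.1 hx n
      simpa using Set.mem_iUnion₂.1 this
    choose Gf hGfmem hxGf using h1
    -- the restriction of the (n+1)-st chosen position is the n-th one
    have hinit : ∀ n, Fin.init (Gf (n+1)) = Gf n := by
      intro n
      have hlegal := BMGame.levels_legal σ (n+1) (Gf (n+1)) (hGfmem (n+1))
      have hxball : x ∈ Metric.ball ((Gf (n+1)) (Fin.last (n+1))).1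
          ((Gf (n+1)) (Fin.last (n+1))).2 := (hleg (n+1) (Gf (n+1)) hlegal.1).2 (hxGf (n+1))
      have hsub := hlegal.2 (Fin.last n)
      have hres : (fun j : Fin ((Fin.last n).val + 1) =>
          Gf (n+1) (Fin.castLE (Nat.succ_le_succ (Fin.last n).isLt.le) j)) =
          Fin.init (Gf (n+1)) := by
        funext j
        exact congrArg (Gf (n+1)) (Fin.ext rfl)
      rw [hres, Fin.succ_last] at hsub
      have hxinit : x ∈ BMGame.IIball σ n (Fin.init (Gf (n+1))) := hsub hxball
      by_contra hne
      exact Set.not_disjoint_iff.2 ⟨x, hxinit, hxGf n⟩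
        (BMGame.levels_pairwise σ n (BMGame.levels_init σ n (Gf (n+1)) (hGfmem (n+1)))
          (hGfmem n) hne)
    set g : ℕ → X × ℝ := fun n => Gf n (Fin.last n) with hgdef
    have hcons : ∀ n, ∀ i : Fin (n+1), Gf n i = g i.val := by
      intro n
      induction n with
      | zero =>
        intro i
        have : i = Fin.last 0 := Fin.ext (by omega)
        rw [this]
        rfl
      | succ n ih =>
        intro i
        induction i using Fin.lastCases with
        | last => rfl
        | cast j =>
          have h1 : Gf (n+1) (Fin.castSucc j) = Fin.init (Gf (n+1)) j := rfl
          rw [h1, hinit n]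
          exact ih j
    have hGfeq : ∀ n, (fun i : Fin (n+1) => g i.val) = Gf n := by
      intro n
      funext i
      exact (hcons n i).symm
    have hpos : ∀ n, 0 < (g n).2 := fun n =>
      (BMGame.levels_legal σ n (Gf n) (hGfmem n)).1 (Fin.last n)
    have hnest : ∀ n, Metric.ball (g (n+1)).1 (g (n+1)).2 ⊆
        Metric.ball (σ n (fun i : Fin (n+1) => g i.val)).1
          (σ n (fun i : Fin (n+1) => g i.val)).2 := by
      intro n
      rw [hGfeq n]
      have hlegal := BMGame.levels_legal σ (n+1) (Gf (n+1)) (hGfmem (n+1))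
      have hsub := hlegal.2 (Fin.last n)
      have hres : (fun j : Fin ((Fin.last n).val + 1) =>
          Gf (n+1) (Fin.castLE (Nat.succ_le_succ (Fin.last n).isLt.le) j)) =
          Fin.init (Gf (n+1)) := by
        funext j
        exact congrArg (Gf (n+1)) (Fin.ext rfl)
      rw [hres, Fin.succ_last, hinit n] at hsub
      have : g (n+1) = Gf (n+1) (Fin.last (n+1)) := rfl
      rw [this]
      exact hsub
    refine hwin g hpos hnest (Set.mem_iInter.2 fun n => ?_)
    rw [hGfeq n]
    exact hxGf n
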